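/- SRDA expected-risk consistency bound: let γ ∈ (0,1], P ∈ [0,1], and r* ∈ [0, 1/2] with 1 − r* ≤ ((1+P)/(1−P))·r* (when P < 1). Then the convex combination ((P/γ)²/((P/γ)² + (1−P)²))·r* + ((1−P)²/((P/γ)² + (1−P)²))·(1−r*) is at most (1+γ)·r*. -/

import Mathlib

theorem stmt_19 (γ P r : ℝ) (hγ0 : 0 < γ) (hγ1 : γ ≤ 1)
    (hP0 : 0 ≤ P) (hP1 : P < 1) (hr0 : 0 ≤ r) (hr2 : r ≤ 1 / 2)
    (h : (1 - P) * (1 - r) ≤ (1 + P) * r) :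
    ((P / γ) ^ 2 / ((P / γ) ^ 2 + (1 - P) ^ 2)) * r +
        ((1 - P) ^ 2 / ((P / γ) ^ 2 + (1 - P) ^ 2)) * (1 - r) ≤ (1 + γ) * r := by
  have hb : (0:ℝ) < (1 - P) ^ 2 := pow_pos (by linarith) 2
  have hD : (0:ℝ) < (P / γ) ^ 2 + (1 - P) ^ 2 := by positivity
  have h2r : 1 - P ≤ 2 * r := by nlinarith
  have key : (P / γ) ^ 2 * γ ^ 2 = P ^ 2 := by
    field_simp
  rw [div_mul_eq_mul_div, div_mul_eq_mul_div, ← add_div, div_le_iff₀ hD]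
  nlinarith [sq_nonneg (1 - (1 + γ) * (1 - P)), key, sq_nonneg (P/γ),
    mul_nonneg (mul_nonneg hγ0.le (sq_nonneg (P/γ))) (by linarith : 0 ≤ 2*r - (1-P)),
    mul_nonneg hb.le (by linarith : 0 ≤ 2*r - (1-P)),
    mul_pos hγ0 hγ0, mul_nonneg hγ0.le hr0]
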